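/- Let g be a finite-dimensional Lie algebra and (ρ, V) a representation with dim g = dim V admitting a generic point v (so x ↦ ρ(x)v is a linear bijection g → V). Define ∗ on g by ρ(x)ρ(y)v = ρ(x∗y)v and the skew form on g ⊕ V* by ω(x + u, y + w) = w(ρ(x)v) − u(ρ(y)v). Equip g ⊕ V* with the semidirect-product Lie bracket where V* is abelian and g acts by the dual representation. Then ω is nondegenerate, closed, and exact; hence g ⊕ V* is a Frobenius Lie algebra. -/

import Mathlib

attribute [local instance 100] LieRing.ofAssociativeRing

/-- For a cuspidal prehomogeneous vector space `(g, ρ, V)` with generic point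
`v`, the semidirect sum `g ⊕ V*` (with `V*` abelian, `g` acting by the dual
representation) with the form `ω(x+u, y+w) = w(ρ(x)v) - u(ρ(y)v)` is a
Frobenius Lie algebra: `ω` is nondegenerate, closed and exact. -/
theorem cuspidalPV_double_frobenius {F : Type*} [Field F] {g : Type*}
    [LieRing g] [LieAlgebra F g] [FiniteDimensional F g]
    {V : Type*} [AddCommGroup V] [Module F V] [FiniteDimensional F V]
    (ρ : g →ₗ⁅F⁆ Module.End F V)
    (hdim : Module.finrank F g = Module.finrank F V)
    (v : V) (hv : ∀ w : V, ∃ x : g, ρ x v = w)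
    (mul : g → g → g) (hmul : ∀ x y : g, ρ x (ρ y v) = ρ (mul x y) v)
    (br : (g × Module.Dual F V) → (g × Module.Dual F V) → (g × Module.Dual F V))
    (hbr : ∀ a b, br a b = (⁅a.1, b.1⁆,
        - (b.2 ∘ₗ (ρ a.1 : V →ₗ[F] V)) + (a.2 ∘ₗ (ρ b.1 : V →ₗ[F] V))))
    (ω : (g × Module.Dual F V) → (g × Module.Dual F V) → F)
    (hω : ∀ a b, ω a b = b.2 (ρ a.1 v) - a.2 (ρ b.1 v)) :
    (∀ a, (∀ b, ω a b = 0) → a = 0) ∧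
      (∀ a b c, ω (br a b) c + ω (br b c) a + ω (br c a) b = 0) ∧
      ∃ f : Module.Dual F (g × Module.Dual F V), ∀ a b, ω a b = f (br a b) := by
  -- the orbit map x ↦ ρ x v as a linear map
  set L : g →ₗ[F] V :=
    { toFun := fun x => ρ x v
      map_add' := fun x y => by simp
      map_smul' := fun c x => by simp } with hL
  have hLsurj : Function.Surjective L := fun w => hv w
  have hLinj : Function.Injective L :=
    ((LinearMap.injective_iff_surjective_of_finrank_eq_finrank hdim).2 hLsurj)
  refine ⟨?_, ?_, ?_⟩
  · intro a ha
    have h1 : a.1 = 0 := by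
      have : ∀ w : Module.Dual F V, w (ρ a.1 v) = 0 := by
        intro w
        have := ha (0, w)
        rw [hω] at this
        simpa using this
      have hz : ρ a.1 v = 0 := by
        rwa [Module.forall_dual_apply_eq_zero_iff F] at this
      have : L a.1 = L 0 := by simpa [hL] using hz
      exact hLinj this
    have h2 : a.2 = 0 := by
      ext w
      obtain ⟨y, hy⟩ := hv w
      have := ha (y, 0)
      rw [hω] at this
      simp only [Prod.snd, LinearMap.zero_apply] at this
      have : a.2 (ρ y v) = 0 := by simpa using this
      simpa [hy] using this
    exact Prod.ext h1 h2
  · intro a b c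
    simp only [hω, hbr, LieHom.map_lie, Ring.lie_def, LinearMap.sub_apply,
      Module.End.mul_apply, LinearMap.add_apply, LinearMap.neg_apply,
      LinearMap.comp_apply, map_sub, map_add, map_neg]
    ring
  · refine ⟨{ toFun := fun a => - a.2 v
              map_add' := fun a b => by simp [neg_add]; ring
              map_smul' := fun c a => by simp }, ?_⟩
    intro a b
    simp only [hω, hbr, LinearMap.coe_mk, AddHom.coe_mk, LinearMap.add_apply,
      LinearMap.neg_apply, LinearMap.comp_apply, map_add, map_neg, neg_add, neg_neg]
    ring
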